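/- Let d ≥ 1, let V ⊆ W be finite subsets of ℤ^d, and let η, η′ be height configurations on ℤ^d. Then (abelianness): (i) m_V^η(x) ≤ m_W^η(x) for all x ∈ V, i.e. the toppling numbers are nondecreasing in the volume; and (ii) if η(x) ≤ η′(x) for all x, then m_V^η(x) ≤ m_V^{η′}(x) for all x ∈ V, i.e. the toppling numbers are monotone in the configuration. -/
import Mathlib


open MeasureTheory
open scoped ENNReal

/-- Nearest-neighbour adjacency on `ℤ^d`: `|x - y| = 1`. -/
def adj (d : ℕ) (x y : Fin d → ℤ) : Prop := (∑ i, (x i - y i).natAbs) = 1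

instance (d : ℕ) (x y : Fin d → ℤ) : Decidable (adj d x y) := by
  unfold adj; infer_instance

/-- The finite-volume toppling operator `(Δ_V m)(x)`, for `x ∈ V`. -/
def lapV (d : ℕ) (V : Finset (Fin d → ℤ)) (m : (Fin d → ℤ) → ℕ) (x : Fin d → ℤ) : ℤ :=
  2 * d * (m x : ℤ) - ∑ y ∈ V.filter (fun y => adj d x y), (m y : ℤ)

/-- `m` is a vector of toppling numbers making `η` stable in `V`:
`η(x) - (Δ_V m)(x) ≤ 2d` for all `x ∈ V`. -/
def Stabilizes (d : ℕ) (V : Finset (Fin d → ℤ)) (η m : (Fin d → ℤ) → ℕ) : Prop :=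
  ∀ x ∈ V, (η x : ℤ) - lapV d V m x ≤ 2 * d

/-- `m` is the pointwise least (on `V`) vector of toppling numbers stabilizing `η` in `V`,
i.e. `m = m_V^η` on `V`. -/
def IsMinStab (d : ℕ) (V : Finset (Fin d → ℤ)) (η m : (Fin d → ℤ) → ℕ) : Prop :=
  Stabilizes d V η m ∧ ∀ m', Stabilizes d V η m' → ∀ x ∈ V, m x ≤ m' x

/-- `η` is stabilizable: for every `x`, `sup_V m_V^η(x) < ∞`. -/
def Stabilizable (d : ℕ) (η : (Fin d → ℤ) → ℕ) : Prop :=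
  ∀ x : Fin d → ℤ, ∃ C : ℕ, ∀ (V : Finset (Fin d → ℤ)) (m : (Fin d → ℤ) → ℕ),
    IsMinStab d V η m → x ∈ V → m x ≤ C

/-- The set `𝒮` of stabilizable configurations. -/
def StabSet (d : ℕ) : Set ((Fin d → ℤ) → ℕ) := {η | Stabilizable d η}

/-- The set of height configurations (all heights at least `1`). -/
def Heights (d : ℕ) : Set ((Fin d → ℤ) → ℕ) := {η | ∀ x, 1 ≤ η x}

/-- The coordinate shift `τ_z η (x) = η (x + z)`. -/
def shiftC (d : ℕ) (z : Fin d → ℤ) (η : (Fin d → ℤ) → ℕ) : (Fin d → ℤ) → ℕ :=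
  fun x => η (x + z)

/-- `ν` is stationary (translation invariant). -/
def Stationary (d : ℕ) (ν : Measure ((Fin d → ℤ) → ℕ)) : Prop :=
  ∀ z : Fin d → ℤ, MeasurePreserving (shiftC d z) ν ν

/-- `ν` is ergodic under the shift action: shift-invariant Borel sets are trivial. -/
def ErgodicShift (d : ℕ) (ν : Measure ((Fin d → ℤ) → ℕ)) : Prop :=
  ∀ A : Set ((Fin d → ℤ) → ℕ), MeasurableSet A → (∀ z, shiftC d z ⁻¹' A = A) →
    ν A = 0 ∨ ν A = 1


/-- abelianness: the minimal toppling numbers are nondecreasing in the volume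
and monotone in the configuration. -/
theorem toppling_numbers_monotone (d : ℕ) (hd : 1 ≤ d)
    (η η' : (Fin d → ℤ) → ℕ) (hη : ∀ x, 1 ≤ η x) (hη' : ∀ x, 1 ≤ η' x) :
    (∀ (V W : Finset (Fin d → ℤ)), V ⊆ W →
      ∀ mV mW : (Fin d → ℤ) → ℕ, IsMinStab d V η mV → IsMinStab d W η mW →
        ∀ x ∈ V, mV x ≤ mW x) ∧
    ((∀ x, η x ≤ η' x) →
      ∀ (V : Finset (Fin d → ℤ)) (m m' : (Fin d → ℤ) → ℕ),
        IsMinStab d V η m → IsMinStab d V η' m' →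
        ∀ x ∈ V, m x ≤ m' x) := by
  constructor
  · intro V W hVW mV mW hV hW x hx
    refine hV.2 mW ?_ x hx
    intro z hz
    have h1 : lapV d W mW z ≤ lapV d V mW z := by
      unfold lapV
      have : ∑ y ∈ V.filter (fun y => adj d z y), (mW y : ℤ) ≤
          ∑ y ∈ W.filter (fun y => adj d z y), (mW y : ℤ) :=
        Finset.sum_le_sum_of_subset_of_nonneg
          (Finset.filter_subset_filter _ hVW) (fun _ _ _ => by positivity)
      linarith
    have h2 := hW.1 z (hVW hz)
    linarith
  · intro hle V m m' hm hm' x hx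
    refine hm.2 m' ?_ x hx
    intro z hz
    have h2 := hm'.1 z hz
    have : (η z : ℤ) ≤ (η' z : ℤ) := by exact_mod_cast hle z
    linarith
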